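/- Let x̄ ∈ ℝ^n, ε > 0, and let B be the closed ball of radius ε centered at x̄. Let f : ℝ^n → ℝ be Lipschitz on B with constant L_f and satisfy |f(x)| ≤ M for all x ∈ B. Let g : ℝ^n → ℝ be differentiable on a neighborhood of B with g(x) ≥ m₁ > 0 for all x ∈ B, g Lipschitz on B with constant L_g, and the gradient ∇g Lipschitz on B with constant L_{∇g}. Set L_H = M·L_g/m₁² + L_f/m₁ and ρ₂ = 2·L_H·L_g/m₁ + M·L_{∇g}/m₁². Then for all x, y ∈ B: f(y)·(g(x) − g(y))/(g(y)·g(x)) + (f(x)/g(x)²)·⟨∇g(x), y − x⟩ ≥ −(ρ₂/2)‖x − y‖₂². -/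

import Mathlib

noncomputable section

open Set

private lemma taylor_aux {E : Type*} [NormedAddCommGroup E] [InnerProductSpace ℝ E] [CompleteSpace E]
    {g : E → ℝ} {G : E → E} {U : Set E}
    (hg : ∀ z ∈ U, HasGradientAt g (G z) z) {x y : E} (hseg : segment ℝ x y ⊆ U)
    {LG : ℝ} (hLip : ∀ z ∈ segment ℝ x y, ‖G z - G x‖ ≤ LG * ‖z - x‖) :
    |g y - g x - (inner ℝ (G x) (y - x) : ℝ)| ≤ LG / 2 * ‖y - x‖ ^ 2 := by
  set v := y - x with hv
  have hcmem : ∀ t ∈ Set.Icc (0:ℝ) 1, x + t • v ∈ segment ℝ x y := by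
    intro t ht
    rw [segment_eq_image']
    exact ⟨t, ht, rfl⟩
  set ip : ℝ := inner ℝ (G x) v with hip
  have hcderiv : ∀ t : ℝ, HasDerivAt (fun t : ℝ => x + t • v) v t := by
    intro t
    simpa using ((hasDerivAt_id t).smul_const v).const_add x
  have hφderiv : ∀ t ∈ Set.Icc (0:ℝ) 1,
      HasDerivAt (fun t : ℝ => g (x + t • v) - g x - t * ip)
        ((inner ℝ (G (x + t • v)) v : ℝ) - ip) t := by
    intro t ht
    have h1 : HasDerivAt (fun t : ℝ => g (x + t • v)) ((inner ℝ (G (x + t • v)) v : ℝ)) t := by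
      have hgc := (hg _ (hseg (hcmem t ht))).hasFDerivAt
      have := hgc.comp_hasDerivAt t (hcderiv t)
      exact this
    have h2 : HasDerivAt (fun t : ℝ => t * ip) ip t := by
      simpa using (hasDerivAt_id t).mul_const ip
    exact (h1.sub_const (g x)).sub h2
  have hf : ContinuousOn (fun t : ℝ => g (x + t • v) - g x - t * ip) (Icc 0 1) :=
    fun t ht => (hφderiv t ht).continuousAt.continuousWithinAt
  have hf' : ∀ t ∈ Ico (0:ℝ) 1,
      HasDerivWithinAt (fun t : ℝ => g (x + t • v) - g x - t * ip)
        ((fun t : ℝ => (inner ℝ (G (x + t • v)) v : ℝ) - ip) t) (Ici t) t :=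
    fun t ht => (hφderiv t (mem_Icc_of_Ico ht)).hasDerivWithinAt
  have ha : ‖(fun t : ℝ => g (x + t • v) - g x - t * ip) 0‖ ≤ LG / 2 * ‖v‖ ^ 2 * 0 ^ 2 := by
    simp
  have hB : ∀ t : ℝ, HasDerivAt (fun t : ℝ => LG / 2 * ‖v‖ ^ 2 * t ^ 2) (LG * ‖v‖ ^ 2 * t) t := by
    intro t
    have := (hasDerivAt_pow 2 t).const_mul (LG / 2 * ‖v‖ ^ 2)
    refine this.congr_deriv ?_
    simp; ring
  have bound : ∀ t ∈ Ico (0:ℝ) 1,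
      ‖(fun t : ℝ => (inner ℝ (G (x + t • v)) v : ℝ) - ip) t‖ ≤ LG * ‖v‖ ^ 2 * t := by
    intro t ht
    have h1 : (inner ℝ (G (x + t • v)) v : ℝ) - ip = inner ℝ (G (x + t • v) - G x) v := by
      rw [inner_sub_left, hip]
    rw [Real.norm_eq_abs]
    simp only []
    rw [h1]
    calc |(inner ℝ (G (x + t • v) - G x) v : ℝ)| ≤ ‖G (x + t • v) - G x‖ * ‖v‖ :=
          abs_real_inner_le_norm _ _
      _ ≤ (LG * ‖x + t • v - x‖) * ‖v‖ :=
          mul_le_mul_of_nonneg_right (hLip _ (hcmem t (mem_Icc_of_Ico ht))) (norm_nonneg _)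
      _ = LG * ‖v‖ ^ 2 * t := by
          have h2 : ‖x + t • v - x‖ = t * ‖v‖ := by
            simp [norm_smul, abs_of_nonneg ht.1]
          rw [h2]; ring
  have key := image_norm_le_of_norm_deriv_right_le_deriv_boundary hf hf' ha hB bound
    (Set.mem_Icc.mpr ⟨zero_le_one, le_refl 1⟩)
  have hc1 : x + v = y := by rw [hv]; abel
  simpa [hc1, Real.norm_eq_abs] using key

theorem stmt1 {n : ℕ} (xbar : EuclideanSpace ℝ (Fin n)) (ε : ℝ) (hε : 0 < ε)
    (B : Set (EuclideanSpace ℝ (Fin n))) (hB : B = Metric.closedBall xbar ε)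
    (f g : EuclideanSpace ℝ (Fin n) → ℝ)
    (G : EuclideanSpace ℝ (Fin n) → EuclideanSpace ℝ (Fin n))
    (Lf M m₁ Lg LG LH ρ₂ : ℝ)
    (hf_lip : ∀ x ∈ B, ∀ y ∈ B, |f x - f y| ≤ Lf * ‖x - y‖)
    (hf_bd : ∀ x ∈ B, |f x| ≤ M)
    (U : Set (EuclideanSpace ℝ (Fin n))) (hU : IsOpen U) (hBU : B ⊆ U)
    (hg_diff : ∀ x ∈ U, HasGradientAt g (G x) x)
    (hm₁ : 0 < m₁) (hg_lb : ∀ x ∈ B, m₁ ≤ g x)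
    (hg_lip : ∀ x ∈ B, ∀ y ∈ B, |g x - g y| ≤ Lg * ‖x - y‖)
    (hG_lip : ∀ x ∈ B, ∀ y ∈ B, ‖G x - G y‖ ≤ LG * ‖x - y‖)
    (hLH : LH = M * Lg / m₁ ^ 2 + Lf / m₁)
    (hρ₂ : ρ₂ = 2 * LH * Lg / m₁ + M * LG / m₁ ^ 2) :
    ∀ x ∈ B, ∀ y ∈ B,
      f y * (g x - g y) / (g y * g x)
        + f x / (g x) ^ 2 * (inner ℝ (G x) (y - x) : ℝ)
        ≥ -(ρ₂ / 2) * ‖x - y‖ ^ 2 := by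
  intro x hx y hy
  by_cases hxy : x = y
  · subst hxy
    simp
  · have hu : 0 < ‖x - y‖ := by
      rw [norm_sub_pos_iff]; exact hxy
    have hun : 0 ≤ ‖x - y‖ := hu.le
    have hM0 : 0 ≤ M := (abs_nonneg _).trans (hf_bd x hx)
    have hLf0 : 0 ≤ Lf := by
      have h := hf_lip x hx y hy
      nlinarith [abs_nonneg (f x - f y)]
    have hLg0 : 0 ≤ Lg := by
      have h := hg_lip x hx y hy
      nlinarith [abs_nonneg (g x - g y)]
    have hLG0 : 0 ≤ LG := by
      have h := hG_lip x hx y hy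
      nlinarith [norm_nonneg (G x - G y)]
    have haP : 0 < g x := lt_of_lt_of_le hm₁ (hg_lb x hx)
    have hbP : 0 < g y := lt_of_lt_of_le hm₁ (hg_lb y hy)
    have hsegB : segment ℝ x y ⊆ B := by
      rw [hB] at hx hy ⊢
      exact (convex_closedBall _ _).segment_subset hx hy
    have hsegU : segment ℝ x y ⊆ U := hsegB.trans hBU
    have hLipseg : ∀ z ∈ segment ℝ x y, ‖G z - G x‖ ≤ LG * ‖z - x‖ :=
      fun z hz => hG_lip z (hsegB hz) x hx
    have hr := taylor_aux hg_diff hsegU hLipseg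
    rw [norm_sub_rev y x] at hr
    set u := ‖x - y‖ with hudef
    set a := g x with hadef
    set b := g y with hbdef
    set p := f x with hpdef
    set q := f y with hqdef
    set ip : ℝ := inner ℝ (G x) (y - x) with hipdef
    set r : ℝ := b - a - ip with hrdef
    -- basic bounds
    have hfx : |p| ≤ M := hf_bd x hx
    have hfy : |q| ≤ M := hf_bd y hy
    have hgl : |a - b| ≤ Lg * u := hg_lip x hx y hy
    have hfl : |q - p| ≤ Lf * u := by
      rw [abs_sub_comm]; exact hf_lip x hx y hy
    have hma : m₁ ≤ a := hg_lb x hx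
    have hmb : m₁ ≤ b := hg_lb y hy
    -- Lipschitz bound on the quotient
    have hH : |q / b - p / a| ≤ LH * u := by
      have key : q / b - p / a = q * (a - b) / (b * a) + (q - p) / a := by
        field_simp
        ring
      have h1 : |q * (a - b) / (b * a)| ≤ M * (Lg * u) / (m₁ * m₁) := by
        rw [abs_div, abs_mul, abs_of_pos (mul_pos hbP haP)]
        exact div_le_div₀ (by positivity) (mul_le_mul hfy hgl (abs_nonneg _) hM0)
          (by positivity) (mul_le_mul hmb hma hm₁.le hbP.le)
      have h2 : |(q - p) / a| ≤ Lf * u / m₁ := by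
        rw [abs_div, abs_of_pos haP]
        exact div_le_div₀ (by positivity) hfl hm₁ hma
      calc |q / b - p / a| = |q * (a - b) / (b * a) + (q - p) / a| := by rw [key]
        _ ≤ |q * (a - b) / (b * a)| + |(q - p) / a| := abs_add_le _ _
        _ ≤ M * (Lg * u) / (m₁ * m₁) + Lf * u / m₁ := add_le_add h1 h2
        _ = LH * u := by rw [hLH]; ring
    have hE1 : |(a - b) / a * (q / b - p / a)| ≤ Lg * LH / m₁ * u ^ 2 := by
      rw [abs_mul]
      have hA : |(a - b) / a| ≤ Lg * u / m₁ := by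
        rw [abs_div, abs_of_pos haP]
        exact div_le_div₀ (by positivity) hgl hm₁ hma
      calc |(a - b) / a| * |q / b - p / a| ≤ (Lg * u / m₁) * (LH * u) :=
            mul_le_mul hA hH (abs_nonneg _) (by positivity)
        _ = Lg * LH / m₁ * u ^ 2 := by ring
    have hE2 : |p * r / a ^ 2| ≤ M * (LG / 2) / m₁ ^ 2 * u ^ 2 := by
      rw [abs_div, abs_mul, abs_of_pos (pow_pos haP 2)]
      have hrr : |r| ≤ LG / 2 * u ^ 2 := by
        rw [hrdef, hbdef, hadef, hipdef]
        exact hr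
      calc |p| * |r| / a ^ 2 ≤ M * (LG / 2 * u ^ 2) / m₁ ^ 2 :=
            div_le_div₀ (by positivity) (mul_le_mul hfx hrr (abs_nonneg _) hM0)
              (by positivity) (by nlinarith)
        _ = M * (LG / 2) / m₁ ^ 2 * u ^ 2 := by ring
    have hTeq : q * (a - b) / (b * a) + p / a ^ 2 * ip
        = (a - b) / a * (q / b - p / a) - p * r / a ^ 2 := by
      rw [hrdef]
      field_simp
      ring
    have hsum : (ρ₂ / 2) * u ^ 2
        = Lg * LH / m₁ * u ^ 2 + M * (LG / 2) / m₁ ^ 2 * u ^ 2 := by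
      rw [hρ₂]; ring
    rw [ge_iff_le, hTeq]
    have h1 := neg_abs_le ((a - b) / a * (q / b - p / a))
    have h2 := le_abs_self (p * r / a ^ 2)
    linarith
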